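/- (Hopping pattern of type A1) Let m be a positive odd integer and n a positive integer divisible by m. Let I' = {1, 2, …, m−1} and J = {0, 1, …, n−1}. Let u and v be integers with gcd(u, m) = 1, gcd(u − 1, m) = 1 and gcd(v, m) = 1. Define f : I' × J → I' × J by f(i, j) = ((u·i) mod m, (j − v·i + v·((u·i) mod m)) mod n). Then f is a well-defined bijection of I' × J satisfying: (i) for every j ∈ J, if f₂(i₁, j) = f₂(i₂, j) then i₁ = i₂; (ii) f₁(i, j) ≠ i for all (i, j) ∈ I' × J; and (iii) the function g(i, j) = (j − v·i) mod n is a hopping invariant, i.e. g(f(i, j)) = g(i, j) for all (i, j) ∈ I' × J. -/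
import Mathlib

lemma stmt3_aux_eq {m a b : ℤ} (hab : m ∣ b - a) (h1 : -m < b - a) (h2 : b - a < m) :
    a = b := by
  have := Int.eq_zero_of_abs_lt_dvd hab (abs_lt.mpr ⟨h1, h2⟩)
  omega

/-- Hopping pattern of type A1: with `m` odd positive, `m ∣ n`, and
`gcd(u,m) = gcd(u−1,m) = gcd(v,m) = 1`, the map
`f(i,j) = (u·i mod m, (j − v·i + v·(u·i mod m)) mod n)` is a bijection of
`I' × J = {1,…,m−1} × {0,…,n−1}` satisfying the half-duplex condition, the
frequency-hopping condition, and admitting the hopping invariant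
`g(i,j) = (j − v·i) mod n`. -/
theorem stmt_3 (m n u v : ℤ) (hm : 0 < m) (hmodd : Odd m) (hn : 0 < n) (hmn : m ∣ n)
    (hu : Int.gcd u m = 1) (hu1 : Int.gcd (u - 1) m = 1) (hv : Int.gcd v m = 1) :
    Set.BijOn (fun x : ℤ × ℤ => (u * x.1 % m, (x.2 - v * x.1 + v * (u * x.1 % m)) % n))
      {x : ℤ × ℤ | 1 ≤ x.1 ∧ x.1 < m ∧ 0 ≤ x.2 ∧ x.2 < n}
      {x : ℤ × ℤ | 1 ≤ x.1 ∧ x.1 < m ∧ 0 ≤ x.2 ∧ x.2 < n} ∧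
    (∀ i₁ i₂ j : ℤ, 1 ≤ i₁ → i₁ < m → 1 ≤ i₂ → i₂ < m → 0 ≤ j → j < n →
      (j - v * i₁ + v * (u * i₁ % m)) % n = (j - v * i₂ + v * (u * i₂ % m)) % n →
      i₁ = i₂) ∧
    (∀ i j : ℤ, 1 ≤ i → i < m → 0 ≤ j → j < n → u * i % m ≠ i) ∧
    (∀ i j : ℤ, 1 ≤ i → i < m → 0 ≤ j → j < n →
      ((j - v * i + v * (u * i % m)) % n - v * (u * i % m)) % n = (j - v * i) % n) := by
  have hm0 : m ≠ 0 := hm.ne'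
  have hn0 : n ≠ 0 := hn.ne'
  have hum : IsCoprime m u := Int.isCoprime_iff_gcd_eq_one.mpr (by rw [Int.gcd_comm]; exact hu)
  have hu1m : IsCoprime m (u - 1) :=
    Int.isCoprime_iff_gcd_eq_one.mpr (by rw [Int.gcd_comm]; exact hu1)
  have hvm : IsCoprime m v := Int.isCoprime_iff_gcd_eq_one.mpr (by rw [Int.gcd_comm]; exact hv)
  -- u*i % m stays in [1, m) for i in [1, m)
  have hmaps1 : ∀ i : ℤ, 1 ≤ i → i < m → 1 ≤ u * i % m ∧ u * i % m < m := by
    intro i h1 h2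
    have hnn : 0 ≤ u * i % m := Int.emod_nonneg _ hm0
    have hlt : u * i % m < m := Int.emod_lt_of_pos _ hm
    refine ⟨?_, hlt⟩
    by_contra h
    have hz : u * i % m = 0 := by omega
    have hdvd : m ∣ u * i := Int.dvd_of_emod_eq_zero hz
    have : m ∣ i := hum.dvd_of_dvd_mul_left hdvd
    have := Int.le_of_dvd (by omega) this
    omega
  -- frequency hopping
  have hfreq : ∀ i : ℤ, 1 ≤ i → i < m → u * i % m ≠ i := by
    intro i h1 h2 h
    have hmod : u * i % m = i % m := by rw [h, Int.emod_eq_of_lt (by omega) h2]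
    have hdvd : m ∣ u * i - i := Int.ModEq.dvd hmod.symm
    have hdvd' : m ∣ (u - 1) * i := by
      have he : (u - 1) * i = u * i - i := by ring
      rw [he]; exact hdvd
    have : m ∣ i := hu1m.dvd_of_dvd_mul_left hdvd'
    have := Int.le_of_dvd (by omega) this
    omega
  -- half duplex
  have hhalf : ∀ i₁ i₂ j : ℤ, 1 ≤ i₁ → i₁ < m → 1 ≤ i₂ → i₂ < m →
      (j - v * i₁ + v * (u * i₁ % m)) % n = (j - v * i₂ + v * (u * i₂ % m)) % n → i₁ = i₂ := by
    intro i₁ i₂ j h11 h12 h21 h22 h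
    have hndvd : n ∣ (j - v * i₂ + v * (u * i₂ % m)) - (j - v * i₁ + v * (u * i₁ % m)) :=
      Int.ModEq.dvd h
    have hmdvd : m ∣ (j - v * i₂ + v * (u * i₂ % m)) - (j - v * i₁ + v * (u * i₁ % m)) :=
      dvd_trans hmn hndvd
    have d1 : m ∣ u * i₁ - u * i₁ % m := Int.dvd_self_sub_of_emod_eq rfl
    have d2 : m ∣ u * i₂ - u * i₂ % m := Int.dvd_self_sub_of_emod_eq rfl
    have key : m ∣ v * ((u - 1) * (i₂ - i₁)) := by
      have he : v * ((u - 1) * (i₂ - i₁)) =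
          ((j - v * i₂ + v * (u * i₂ % m)) - (j - v * i₁ + v * (u * i₁ % m)))
            + v * (u * i₂ - u * i₂ % m) - v * (u * i₁ - u * i₁ % m) := by ring
      rw [he]
      exact dvd_sub (dvd_add hmdvd (d2.mul_left v)) (d1.mul_left v)
    have key2 : m ∣ (u - 1) * (i₂ - i₁) := hvm.dvd_of_dvd_mul_left key
    have key3 : m ∣ i₂ - i₁ := hu1m.dvd_of_dvd_mul_left key2
    exact stmt3_aux_eq key3 (by omega) (by omega)
  refine ⟨?_, fun i₁ i₂ j h11 h12 h21 h22 _ _ h => hhalf i₁ i₂ j h11 h12 h21 h22 h,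
    fun i j h1 h2 _ _ => hfreq i h1 h2, ?_⟩
  · -- BijOn
    have hS : ({x : ℤ × ℤ | 1 ≤ x.1 ∧ x.1 < m ∧ 0 ≤ x.2 ∧ x.2 < n} : Set (ℤ × ℤ)).Finite := by
      apply Set.Finite.subset (Set.finite_Icc ((1 : ℤ), (0 : ℤ)) (m, n))
      rintro ⟨a, b⟩ ⟨h1, h2, h3, h4⟩
      exact ⟨⟨h1, h3⟩, ⟨le_of_lt h2, le_of_lt h4⟩⟩
    have hmapsTo : Set.MapsTo
        (fun x : ℤ × ℤ => (u * x.1 % m, (x.2 - v * x.1 + v * (u * x.1 % m)) % n))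
        {x : ℤ × ℤ | 1 ≤ x.1 ∧ x.1 < m ∧ 0 ≤ x.2 ∧ x.2 < n}
        {x : ℤ × ℤ | 1 ≤ x.1 ∧ x.1 < m ∧ 0 ≤ x.2 ∧ x.2 < n} := by
      rintro ⟨i, j⟩ ⟨h1, h2, h3, h4⟩
      obtain ⟨ha, hb⟩ := hmaps1 i h1 h2
      exact ⟨ha, hb, Int.emod_nonneg _ hn0, Int.emod_lt_of_pos _ hn⟩
    have hinj : Set.InjOn
        (fun x : ℤ × ℤ => (u * x.1 % m, (x.2 - v * x.1 + v * (u * x.1 % m)) % n))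
        {x : ℤ × ℤ | 1 ≤ x.1 ∧ x.1 < m ∧ 0 ≤ x.2 ∧ x.2 < n} := by
      rintro ⟨i₁, j₁⟩ ⟨h11, h12, h13, h14⟩ ⟨i₂, j₂⟩ ⟨h21, h22, h23, h24⟩ h
      simp only [Prod.mk.injEq] at h
      obtain ⟨ha, hb⟩ := h
      -- first components give i₁ = i₂
      have hdvd : m ∣ u * i₂ - u * i₁ := Int.ModEq.dvd (ha : Int.ModEq m (u * i₁) (u * i₂))
      have hdvd' : m ∣ u * (i₂ - i₁) := by
        have he : u * (i₂ - i₁) = u * i₂ - u * i₁ := by ring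
        rw [he]; exact hdvd
      have hi : i₁ = i₂ := stmt3_aux_eq (hum.dvd_of_dvd_mul_left hdvd') (by omega) (by omega)
      subst hi
      have hj : j₁ = j₂ := by
        have hndvd : n ∣ (j₂ - v * i₁ + v * (u * i₁ % m)) - (j₁ - v * i₁ + v * (u * i₁ % m)) :=
          Int.ModEq.dvd (hb : Int.ModEq n _ _)
        have he : (j₂ - v * i₁ + v * (u * i₁ % m)) - (j₁ - v * i₁ + v * (u * i₁ % m)) = j₂ - j₁ := by
          ring
        rw [he] at hndvd
        exact stmt3_aux_eq hndvd (by omega) (by omega)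
      simp [hj]
    exact (hS.injOn_iff_bijOn_of_mapsTo hmapsTo).mp hinj
  · -- invariant
    intro i j h1 h2 h3 h4
    have : ((j - v * i + v * (u * i % m)) % n - v * (u * i % m)) % n
        = ((j - v * i + v * (u * i % m)) - v * (u * i % m)) % n := by
      conv_rhs => rw [Int.sub_emod]
      rw [Int.sub_emod, Int.emod_emod_of_dvd _ dvd_rfl]
    rw [this]
    congr 1
    ring
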